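/- arXiv:1404.2371 — 9 statements merged into one kernel-verified Lean document; each statement's English description precedes it below -/
import Mathlib

section
/- Let n ≥ 2 be an integer. For all reals L, U, a, x with 0 < L, L ≤ a, a ≤ U and x = a^n, the Secant–Newton map is contracting, i.e. setting L* = L + (x − L^n)/(∑_{i=0}^{n-1} L^{n-1-i} U^i) and U* = U + (x − U^n)/(n·U^{n-1}), one has L ≤ L* , L* ≤ a, a ≤ U* and U* ≤ U. -/
theorem secant_newton_contracting (n : ℕ) (hn : 2 ≤ n) :
    ∀ L U a x : ℝ, 0 < L → L ≤ a → a ≤ U → x = a ^ n →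
      L ≤ L + (x - L ^ n) / (∑ i ∈ Finset.range n, L ^ (n-1-i) * U ^ i) ∧
      L + (x - L ^ n) / (∑ i ∈ Finset.range n, L ^ (n-1-i) * U ^ i) ≤ a ∧
      a ≤ U + (x - U ^ n) / (n * U ^ (n-1)) ∧
      U + (x - U ^ n) / (n * U ^ (n-1)) ≤ U := by
  intro L U a x hL hLa haU hx
  have ha : 0 < a := lt_of_lt_of_le hL hLa
  have hU : 0 < U := lt_of_lt_of_le ha haU
  set S := ∑ i ∈ Finset.range n, L ^ (n-1-i) * U ^ i with hS
  have hSpos : 0 < S := Finset.sum_pos (fun i _ => by positivity)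
    ⟨0, Finset.mem_range.mpr (by omega)⟩
  have hnU : (0:ℝ) < (n : ℝ) * U ^ (n-1) := by positivity
  subst hx
  have hLn : L ^ n ≤ a ^ n := pow_le_pow_left₀ hL.le hLa n
  have hUn : a ^ n ≤ U ^ n := pow_le_pow_left₀ ha.le haU n
  refine ⟨?_, ?_, ?_, ?_⟩
  · have : 0 ≤ (a ^ n - L ^ n) / S := div_nonneg (by linarith) hSpos.le
    linarith
  · have key : a ^ n - L ^ n
        = (∑ i ∈ Finset.range n, a ^ i * L ^ (n-1-i)) * (a - L) :=
      (geom_sum₂_mul a L n).symm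
    have hsum : (∑ i ∈ Finset.range n, a ^ i * L ^ (n-1-i)) ≤ S := by
      rw [hS]
      apply Finset.sum_le_sum
      intro i _
      rw [mul_comm (L ^ (n-1-i))]
      exact mul_le_mul_of_nonneg_right (pow_le_pow_left₀ ha.le haU i) (by positivity)
    have h2 : (∑ i ∈ Finset.range n, a ^ i * L ^ (n-1-i)) * (a - L) ≤ S * (a - L) :=
      mul_le_mul_of_nonneg_right hsum (by linarith)
    have h3 : (a ^ n - L ^ n) / S ≤ a - L := by
      rw [div_le_iff₀ hSpos]
      calc a ^ n - L ^ n ≤ S * (a - L) := by rw [key]; exact h2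
        _ = (a - L) * S := mul_comm _ _
    linarith
  · have key : U ^ n - a ^ n
        = (∑ i ∈ Finset.range n, U ^ i * a ^ (n-1-i)) * (U - a) :=
      (geom_sum₂_mul U a n).symm
    have hsum : (∑ i ∈ Finset.range n, U ^ i * a ^ (n-1-i)) ≤ (n : ℝ) * U ^ (n-1) := by
      calc (∑ i ∈ Finset.range n, U ^ i * a ^ (n-1-i))
          ≤ ∑ i ∈ Finset.range n, U ^ (n-1) := by
            apply Finset.sum_le_sum
            intro i hi
            have hi' : i < n := Finset.mem_range.mp hi
            have : U ^ i * a ^ (n-1-i) ≤ U ^ i * U ^ (n-1-i) :=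
              mul_le_mul_of_nonneg_left (pow_le_pow_left₀ ha.le haU _) (by positivity)
            calc U ^ i * a ^ (n-1-i) ≤ U ^ i * U ^ (n-1-i) := this
              _ = U ^ (i + (n-1-i)) := (pow_add U i (n-1-i)).symm
              _ = U ^ (n-1) := by congr 1; omega
        _ = (n : ℝ) * U ^ (n-1) := by
            rw [Finset.sum_const, Finset.card_range, nsmul_eq_mul]
    have h2 : (U ^ n - a ^ n) / ((n : ℝ) * U ^ (n-1)) ≤ U - a := by
      rw [div_le_iff₀ hnU, key]
      have := mul_le_mul_of_nonneg_right hsum (by linarith : (0:ℝ) ≤ U - a)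
      linarith [this]
    have h4 : -(U - a) ≤ (a ^ n - U ^ n) / ((n : ℝ) * U ^ (n-1)) := by
      have : (a ^ n - U ^ n) / ((n : ℝ) * U ^ (n-1))
          = -((U ^ n - a ^ n) / ((n : ℝ) * U ^ (n-1))) := by ring
      rw [this]
      linarith
    push_cast
    linarith
  · have : (a ^ n - U ^ n) / ((n : ℝ) * U ^ (n-1)) ≤ 0 :=
      div_nonpos_of_nonpos_of_nonneg (by linarith) hnU.le
    push_cast
    linarith
end

section
/- Let n ≥ 2 be an integer and let p = (p_0,…,p_{2n}) be a real coefficient vector such that for all reals L, U, a with 0 < L ≤ a ≤ U and x = a^n one has L + (x − L^n)/(∑_{i=0}^{n-1} p_{n+1+i} L^{n-1-i} U^i) ≤ a. Then for all reals L, U with 0 < L < U, one has 1/(∑_{i=0}^{n-1} p_{n+1+i} L^{n-1-i} U^i) ≤ 1/(∑_{i=0}^{n-1} U^{n-1-i} L^i). -/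
theorem lower_denominator_bound (n : ℕ) (hn : 2 ≤ n) (p : ℕ → ℝ)
    (h : ∀ L U a : ℝ, 0 < L → L ≤ a → a ≤ U →
      L + (a ^ n - L ^ n) / (∑ i ∈ Finset.range n, p (n+1+i) * L ^ (n-1-i) * U ^ i) ≤ a) :
    ∀ L U : ℝ, 0 < L → L < U →
      1 / (∑ i ∈ Finset.range n, p (n+1+i) * L ^ (n-1-i) * U ^ i) ≤
      1 / (∑ i ∈ Finset.range n, U ^ (n-1-i) * L ^ i) := by
  intro L U hL hLU
  set D := ∑ i ∈ Finset.range n, p (n+1+i) * L ^ (n-1-i) * U ^ i with hD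
  set S := ∑ i ∈ Finset.range n, U ^ (n-1-i) * L ^ i with hS
  have hU : 0 < U := hL.trans hLU
  have hSpos : 0 < S := by
    apply Finset.sum_pos (fun i _ => by positivity)
    simp only [Finset.nonempty_range_iff]
    omega
  have hid : S * (L - U) = L ^ n - U ^ n := by
    rw [hS]
    rw [show (∑ i ∈ Finset.range n, U ^ (n-1-i) * L ^ i)
        = ∑ i ∈ Finset.range n, L ^ i * U ^ (n-1-i) by
      exact Finset.sum_congr rfl fun i _ => mul_comm _ _]
    exact geom_sum₂_mul L U n
  have hkey := h L U U hL hLU.le le_rfl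
  have h1 : (U ^ n - L ^ n) / D ≤ U - L := by linarith
  rcases le_or_gt D 0 with hDle | hDpos
  · rcases eq_or_lt_of_le hDle with hD0 | hDneg
    · rw [hD0]
      simp
      positivity
    · have h2 : 1 / D ≤ 0 := by
        apply div_nonpos_of_nonneg_of_nonpos <;> linarith
      have h3 : (0:ℝ) ≤ 1 / S := by positivity
      linarith
  · have hSD : S ≤ D := by
      rw [div_le_iff₀ hDpos] at h1
      nlinarith
    exact one_div_le_one_div_of_le hSpos hSD
end

section
/- Let n ≥ 2 be an integer and let p = (p_0,…,p_{2n}) and q = (q_0,…,q_{2n}) be real coefficient vectors such that the n-th degree map R_{p,q} is contracting. Then for all reals L, U, a with 0 < L ≤ a ≤ U and x = a^n, the lower output L′ of R_{p,q} satisfies L′ ≤ L*, where L* = L + (x − L^n)/(∑_{i=0}^{n-1} L^{n-1-i} U^i) is the lower output of the Secant–Newton map. -/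
/-- Lower output `L'` of the n-th degree map `R_{p,q}` on `([L,U], x)`. -/
noncomputable def lowerOut (n : ℕ) (p : ℕ → ℝ) (L U x : ℝ) : ℝ :=
  L + (x + ∑ i ∈ Finset.range (n+1), p i * L ^ (n - i) * U ^ i) /
      (∑ i ∈ Finset.range n, p (n+1+i) * L ^ (n-1-i) * U ^ i)

/-- Upper output `U'` of the n-th degree map `R_{p,q}` on `([L,U], x)`. -/
noncomputable def upperOut (n : ℕ) (q : ℕ → ℝ) (L U x : ℝ) : ℝ :=
  U + (x + ∑ i ∈ Finset.range (n+1), q i * U ^ (n - i) * L ^ i) /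
      (∑ i ∈ Finset.range n, q (n+1+i) * U ^ (n-1-i) * L ^ i)

/-- The n-th degree map `R_{p,q}` is contracting:
for all `0 < L ≤ a ≤ U` with `x = a^n`, `L ≤ L' ≤ a ≤ U' ≤ U`. -/
def Contracting (n : ℕ) (p q : ℕ → ℝ) : Prop :=
  ∀ L U a : ℝ, 0 < L → L ≤ a → a ≤ U →
    L ≤ lowerOut n p L U (a ^ n) ∧ lowerOut n p L U (a ^ n) ≤ a ∧
    a ≤ upperOut n q L U (a ^ n) ∧ upperOut n q L U (a ^ n) ≤ U

theorem lower_output_le_secant (n : ℕ) (hn : 2 ≤ n) (p q : ℕ → ℝ)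
    (hc : Contracting n p q) :
    ∀ L U a : ℝ, 0 < L → L ≤ a → a ≤ U →
      lowerOut n p L U (a ^ n) ≤
      L + (a ^ n - L ^ n) / (∑ i ∈ Finset.range n, L ^ (n-1-i) * U ^ i) := by
  intro L U a hL hLa haU
  have hU : 0 < U := lt_of_lt_of_le hL (hLa.trans haU)
  set S : ℝ := ∑ i ∈ Finset.range n, L ^ (n-1-i) * U ^ i with hSdef
  set D : ℝ := ∑ i ∈ Finset.range n, p (n+1+i) * L ^ (n-1-i) * U ^ i with hDdef
  set P : ℝ := ∑ i ∈ Finset.range (n+1), p i * L ^ (n - i) * U ^ i with hPdef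
  have hS : 0 < S := by
    apply Finset.sum_pos
    · intro i _
      positivity
    · exact ⟨0, Finset.mem_range.mpr (by omega)⟩
  have han : L ^ n ≤ a ^ n := pow_le_pow_left₀ hL.le hLa n
  have hSmul : S * (U - L) = U ^ n - L ^ n := by
    have := geom_sum₂_mul U L n
    rw [hSdef]
    rw [← this]
    ring_nf
  rw [lowerOut]
  by_cases hD : D = 0
  · rw [← hDdef, hD, div_zero, add_zero]
    have : 0 ≤ (a ^ n - L ^ n) / S := div_nonneg (by linarith) hS.le
    linarith
  · -- From contracting at a = L: P = -L^n
    have hcL := hc L U L hL le_rfl (hLa.trans haU)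
    have heq : lowerOut n p L U (L ^ n) = L := le_antisymm hcL.2.1 hcL.1
    rw [lowerOut] at heq
    have hnum : L ^ n + P = 0 := by
      have h0 : (L ^ n + P) / D = 0 := by
        rw [← hPdef, ← hDdef] at heq; linarith
      rcases div_eq_zero_iff.mp h0 with h | h
      · exact h
      · exact absurd h hD
    have hPval : P = -L ^ n := by linarith
    rcases eq_or_lt_of_le (hLa.trans haU) with hUL | hUL
    · -- U = L, so a = L
      have haL : a = L := le_antisymm (haU.trans hUL.symm.le) hLa
      rw [← hPdef, ← hDdef, hPval, haL]
      simp
    · -- L < U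
      have hcU := hc L U U hL hUL.le le_rfl
      have hULn : 0 < U ^ n - L ^ n := by
        have := pow_lt_pow_left₀ hUL hL.le (by omega : n ≠ 0)
        linarith
      have hq1 : 0 ≤ (U ^ n + P) / D := by
        have := hcU.1
        rw [lowerOut, ← hPdef, ← hDdef] at this
        linarith
      have hq2 : (U ^ n + P) / D ≤ U - L := by
        have := hcU.2.1
        rw [lowerOut, ← hPdef, ← hDdef] at this
        linarith
      rw [hPval] at hq1 hq2
      have hDpos : 0 < D := by
        rcases lt_or_gt_of_ne hD with h | h
        · exfalso
          have : (U ^ n + -L ^ n) / D < 0 :=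
            div_neg_of_pos_of_neg (by linarith) h
          linarith
        · exact h
      have hSD : S ≤ D := by
        have h1 : U ^ n - L ^ n ≤ (U - L) * D := by
          rw [div_le_iff₀ hDpos] at hq2
          linarith
        have h2 : S * (U - L) ≤ (U - L) * D := by rw [hSmul]; exact h1
        have hULpos : 0 < U - L := by linarith
        nlinarith
      rw [← hPdef, ← hDdef, hPval]
      have : (a ^ n + -L ^ n) / D ≤ (a ^ n - L ^ n) / S := by
        have h := div_le_div_of_nonneg_left (by linarith : (0:ℝ) ≤ a ^ n - L ^ n) hS hSD
        calc (a ^ n + -L ^ n) / D = (a ^ n - L ^ n) / D := by ring_nf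
          _ ≤ (a ^ n - L ^ n) / S := h
      linarith
end

section
/- Let n ≥ 2 be an integer and let q = (q_0,…,q_{2n}) be a real coefficient vector such that for all reals L, U, a with 0 < L ≤ a < U and x = a^n one has a ≤ U + (x − U^n)/(∑_{i=0}^{n-1} q_{n+1+i} U^{n-1-i} L^i). Then for all reals L, U, a with 0 < L ≤ a < U, one has 1/(∑_{i=0}^{n-1} U^{n-1-i} a^i) ≥ 1/(∑_{i=0}^{n-1} q_{n+1+i} U^{n-1-i} L^i). -/
theorem upper_denominator_bound (n : ℕ) (hn : 2 ≤ n) (q : ℕ → ℝ)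
    (h : ∀ L U a : ℝ, 0 < L → L ≤ a → a < U →
      a ≤ U + (a ^ n - U ^ n) / (∑ i ∈ Finset.range n, q (n+1+i) * U ^ (n-1-i) * L ^ i)) :
    ∀ L U a : ℝ, 0 < L → L ≤ a → a < U →
      1 / (∑ i ∈ Finset.range n, U ^ (n-1-i) * a ^ i) ≥
      1 / (∑ i ∈ Finset.range n, q (n+1+i) * U ^ (n-1-i) * L ^ i) := by
  intro L U a hL hLa haU
  have ha : 0 < a := lt_of_lt_of_le hL hLa
  have hU : 0 < U := lt_trans ha haU
  set S := ∑ i ∈ Finset.range n, U ^ (n-1-i) * a ^ i with hSdef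
  set Q := ∑ i ∈ Finset.range n, q (n+1+i) * U ^ (n-1-i) * L ^ i with hQdef
  have hS : 0 < S := by
    apply Finset.sum_pos
    · intro i _
      exact mul_pos (pow_pos hU _) (pow_pos ha _)
    · exact ⟨0, Finset.mem_range.mpr (by omega)⟩
  have hfac : (a - U) * S = a ^ n - U ^ n := by
    have := geom_sum₂_mul a U n
    rw [hSdef]
    calc (a - U) * ∑ i ∈ Finset.range n, U ^ (n-1-i) * a ^ i
        = (∑ i ∈ Finset.range n, a ^ i * U ^ (n-1-i)) * (a - U) := by
          rw [Finset.sum_congr rfl (fun i _ => mul_comm (U ^ (n-1-i)) (a ^ i))]; ring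
      _ = a ^ n - U ^ n := this
  rcases le_or_gt Q 0 with hQ | hQ
  · have h1 : (1:ℝ) / Q ≤ 0 := one_div_nonpos.mpr hQ
    have h2 : (0:ℝ) ≤ 1 / S := le_of_lt (one_div_pos.mpr hS)
    exact le_trans h1 h2
  · have hh := h L U a hL hLa haU
    have h1 : a - U ≤ (a - U) * S / Q := by
      rw [hfac]; linarith
    have h2 : (a - U) * Q ≤ (a - U) * S := by
      have h3 := mul_le_mul_of_nonneg_right h1 (le_of_lt hQ)
      rwa [div_mul_cancel₀ _ (ne_of_gt hQ)] at h3
    have hSQ : S ≤ Q := by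
      have hneg : a - U < 0 := by linarith
      nlinarith
    exact one_div_le_one_div_of_le hS hSQ
end

section
/- Let n ≥ 2 be an integer and let p = (p_0,…,p_{2n}) and q = (q_0,…,q_{2n}) be real coefficient vectors such that the n-th degree map R_{p,q} is contracting. Then for all reals L, U, a with 0 < L ≤ a ≤ U and x = a^n, the upper output U′ of R_{p,q} satisfies U* ≤ U′, where U* = U + (x − U^n)/(n·U^{n-1}) is the upper output of the Secant–Newton map. -/
theorem secant_le_upper_output (n : ℕ) (hn : 2 ≤ n) (p q : ℕ → ℝ)
    (hc : Contracting n p q) :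
    ∀ L U a : ℝ, 0 < L → L ≤ a → a ≤ U →
      U + (a ^ n - U ^ n) / ((n : ℝ) * U ^ (n-1)) ≤ upperOut n q L U (a ^ n) := by
  intro L U a hL hLa haU
  have hLU : L ≤ U := hLa.trans haU
  have hU : (0:ℝ) < U := hL.trans_le hLU
  set S := ∑ i ∈ Finset.range (n+1), q i * U ^ (n - i) * L ^ i with hSdef
  set D := ∑ i ∈ Finset.range n, q (n+1+i) * U ^ (n-1-i) * L ^ i with hDdef
  have hout : ∀ x : ℝ, upperOut n q L U x = U + (x + S) / D := fun x => rfl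
  have hn0 : (0:ℝ) < (n:ℝ) := by positivity
  have hNU : (0:ℝ) < (n:ℝ) * U ^ (n-1) := by positivity
  have haU' : a ^ n - U ^ n ≤ 0 := by
    have := pow_le_pow_left₀ (le_of_lt (hL.trans_le hLa)) haU n
    linarith
  have htgt_le : (a ^ n - U ^ n) / ((n : ℝ) * U ^ (n-1)) ≤ 0 :=
    div_nonpos_of_nonpos_of_nonneg haU' hNU.le
  -- f(U) = U
  have hcU := (hc L U U hL hLU le_rfl).2.2
  have hfU : upperOut n q L U (U ^ n) = U := le_antisymm hcU.2 hcU.1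
  rw [hout] at hfU
  have hfrac0 : (U ^ n + S) / D = 0 := by linarith
  by_cases hD0 : D = 0
  · -- division by zero: output is U
    rw [hout, hD0, div_zero]
    linarith
  · have hS : S = -U ^ n := by
      rcases div_eq_zero_iff.mp hfrac0 with h | h
      · linarith
      · exact absurd h hD0
    rw [hout, hS]
    rcases lt_or_gt_of_ne hD0 with hDneg | hDpos
    · -- negative denominator: output ≥ U
      have : 0 ≤ (a ^ n + -U ^ n) / D :=
        div_nonneg_iff.mpr (Or.inr ⟨by linarith, hDneg.le⟩)
      linarith
    · -- positive denominator: show D ≥ n U^(n-1)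
      have key : ∀ b : ℝ, L ≤ b → b < U →
          (∑ k ∈ Finset.range n, b ^ k * U ^ (n-1-k)) ≤ D := by
        intro b hLb hbU
        have hcb := (hc L U b hL hLb hbU.le).2.2.1
        rw [hout, hS] at hcb
        have h1 : (b - U) * D ≤ b ^ n - U ^ n := by
          have := (le_div_iff₀ hDpos).mp (by linarith : b - U ≤ (b ^ n + -U ^ n) / D)
          linarith
        have h2 : (∑ k ∈ Finset.range n, b ^ k * U ^ (n-1-k)) * (b - U) = b ^ n - U ^ n :=
          geom_sum₂_mul b U n
        nlinarith [h2, h1, sub_neg.mpr hbU]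
      rcases eq_or_lt_of_le hLU with hEq | hLt
      · have haU2 : a = U := le_antisymm haU (hEq ▸ hLa)
        rw [haU2]
        simp
      have hDge : (n : ℝ) * U ^ (n-1) ≤ D := by
        have hcont : Continuous fun b : ℝ => ∑ k ∈ Finset.range n, b ^ k * U ^ (n-1-k) := by
          apply continuous_finset_sum
          intro k _
          exact (continuous_pow k).mul continuous_const
        have htend : Filter.Tendsto (fun b : ℝ => ∑ k ∈ Finset.range n, b ^ k * U ^ (n-1-k))
            (nhdsWithin U (Set.Iio U)) (nhds (∑ k ∈ Finset.range n, U ^ k * U ^ (n-1-k))) :=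
          (hcont.tendsto U).mono_left nhdsWithin_le_nhds
        have hev : ∀ᶠ b in nhdsWithin U (Set.Iio U),
            (∑ k ∈ Finset.range n, b ^ k * U ^ (n-1-k)) ≤ D := by
          filter_upwards [Ioo_mem_nhdsLT_of_mem (Set.mem_Ioc.mpr ⟨hLt, le_rfl⟩)] with b hb
          exact key b hb.1.le hb.2
        have hle := le_of_tendsto htend hev
        have hsum : (∑ k ∈ Finset.range n, U ^ k * U ^ (n-1-k)) = (n : ℝ) * U ^ (n-1) := by
          rw [Finset.sum_congr rfl (fun k hk => ?_), Finset.sum_const, Finset.card_range,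
            nsmul_eq_mul]
          rw [← pow_add]
          congr 1
          have := Finset.mem_range.mp hk
          omega
        rwa [hsum] at hle
      -- conclude
      have h1 : (a ^ n - U ^ n) / ((n : ℝ) * U ^ (n-1)) ≤ (a ^ n - U ^ n) / D := by
        rw [div_le_div_iff₀ hNU hDpos]
        nlinarith
      have : a ^ n + -U ^ n = a ^ n - U ^ n := by ring
      rw [this]
      linarith
end

section
/- Let n ≥ 2 be an integer and let p = (p_0,…,p_{2n}) and q = (q_0,…,q_{2n}) be real coefficient vectors such that the n-th degree map R_{p,q} is contracting. Then for all reals L, U, a with 0 < L ≤ a ≤ U and x = a^n, the output interval of the Secant–Newton map is contained in the output interval of R_{p,q}: writing [L′,U′] = R_{p,q}([L,U],x), L* = L + (x − L^n)/(∑_{i=0}^{n-1} L^{n-1-i} U^i) and U* = U + (x − U^n)/(n·U^{n-1}), one has L′ ≤ L* and U* ≤ U′. -/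
theorem secant_newton_optimal (n : ℕ) (hn : 2 ≤ n) (p q : ℕ → ℝ)
    (hc : Contracting n p q) :
    ∀ L U a : ℝ, 0 < L → L ≤ a → a ≤ U →
      lowerOut n p L U (a ^ n) ≤
        L + (a ^ n - L ^ n) / (∑ i ∈ Finset.range n, L ^ (n-1-i) * U ^ i) ∧
      U + (a ^ n - U ^ n) / ((n : ℝ) * U ^ (n-1)) ≤ upperOut n q L U (a ^ n) := by
  intro L U a hL hLa haU
  have hU : 0 < U := hL.trans_le (hLa.trans haU)
  have hLU : L ≤ U := hLa.trans haU
  have hn0 : n ≠ 0 := by omega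
  obtain ⟨hl1, hl2, hu1, hu2⟩ := hc L U L hL le_rfl hLU
  obtain ⟨hl3, hl4, hu3, hu4⟩ := hc L U U hL hLU le_rfl
  simp only [lowerOut, upperOut] at hl1 hl2 hu1 hu2 hl3 hl4 hu3 hu4 ⊢
  set P := ∑ i ∈ Finset.range (n+1), p i * L ^ (n - i) * U ^ i with hPdef
  set D := ∑ i ∈ Finset.range n, p (n+1+i) * L ^ (n-1-i) * U ^ i with hDdef
  set Q := ∑ i ∈ Finset.range (n+1), q i * U ^ (n - i) * L ^ i with hQdef
  set E := ∑ i ∈ Finset.range n, q (n+1+i) * U ^ (n-1-i) * L ^ i with hEdef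
  set S := ∑ i ∈ Finset.range n, L ^ (n-1-i) * U ^ i with hSdef
  have hSpos : 0 < S :=
    Finset.sum_pos (fun i _ => by positivity) (Finset.nonempty_range_iff.mpr hn0)
  have hnU : (0:ℝ) < (n:ℝ) * U ^ (n-1) := by positivity
  have hLna : L ^ n ≤ a ^ n := pow_le_pow_left₀ hL.le hLa n
  have haUn : a ^ n ≤ U ^ n := pow_le_pow_left₀ (hL.le.trans hLa) haU n
  constructor
  · -- lower bound
    by_cases hD0 : D = 0
    · rw [hD0, div_zero, add_zero]
      have h0 : 0 ≤ (a ^ n - L ^ n) / S := div_nonneg (by linarith) hSpos.le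
      linarith
    · have hP : P = -L ^ n := by
        have h0 : (L ^ n + P) / D = 0 := le_antisymm (by linarith) (by linarith)
        rcases div_eq_zero_iff.mp h0 with h | h
        · linarith
        · exact absurd h hD0
      rw [hP, ← sub_eq_add_neg]
      rcases eq_or_lt_of_le hLU with h | hlt
      · have haL : a = L := le_antisymm (h ▸ haU) hLa
        rw [haL]; simp
      · have hpow : L ^ n < U ^ n := pow_lt_pow_left₀ hlt hL.le hn0
        have hDpos : 0 < D := by
          by_contra h
          have hDneg : D < 0 := lt_of_le_of_ne (not_lt.mp h) hD0
          have hq : (U ^ n + P) / D < 0 :=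
            div_neg_of_pos_of_neg (by rw [hP]; linarith) hDneg
          linarith
        have hSD : S ≤ D := by
          have h1 : (U ^ n + P) / D ≤ U - L := by linarith
          rw [hP, ← sub_eq_add_neg, div_le_iff₀ hDpos] at h1
          have hSalt : S = ∑ i ∈ Finset.range n, U ^ i * L ^ (n-1-i) :=
            Finset.sum_congr rfl (fun i _ => mul_comm _ _)
          have h3 : S * (U - L) = U ^ n - L ^ n := by
            rw [hSalt]; exact geom_sum₂_mul U L n
          have h4 : S * (U - L) ≤ D * (U - L) := by rw [h3]; linarith
          exact le_of_mul_le_mul_right h4 (by linarith)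
        gcongr
  · -- upper bound
    by_cases hE0 : E = 0
    · rw [hE0, div_zero, add_zero]
      have h0 : (a ^ n - U ^ n) / ((n:ℝ) * U ^ (n-1)) ≤ 0 :=
        div_nonpos_of_nonpos_of_nonneg (by linarith) hnU.le
      linarith
    · have hQ : Q = -U ^ n := by
        have h0 : (U ^ n + Q) / E = 0 := le_antisymm (by linarith) (by linarith)
        rcases div_eq_zero_iff.mp h0 with h | h
        · linarith
        · exact absurd h hE0
      rw [hQ, ← sub_eq_add_neg]
      rcases eq_or_lt_of_le haU with h | haU'
      · rw [h]; simp
      · have hLU' : L < U := lt_of_le_of_lt hLa haU'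
        have hpow : L ^ n < U ^ n := pow_lt_pow_left₀ hLU' hL.le hn0
        have hEpos : 0 < E := by
          by_contra h
          have hEneg : E < 0 := lt_of_le_of_ne (not_lt.mp h) hE0
          have hq : 0 < (L ^ n + Q) / E :=
            div_pos_of_neg_of_neg (by rw [hQ]; linarith) hEneg
          linarith
        have hkey : ∀ b, L ≤ b → b < U →
            (∑ i ∈ Finset.range n, U ^ i * b ^ (n-1-i)) ≤ E := by
          intro b hLb hbU
          obtain ⟨-, -, hb1, -⟩ := hc L U b hL hLb hbU.le
          simp only [upperOut] at hb1
          rw [← hQdef, ← hEdef, hQ, ← sub_eq_add_neg] at hb1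
          have h1 : (b - U) * E ≤ b ^ n - U ^ n :=
            (le_div_iff₀ hEpos).mp (by linarith)
          have hUb : (0:ℝ) < U - b := by linarith
          have h3 : (∑ i ∈ Finset.range n, U ^ i * b ^ (n-1-i)) * (U - b)
              = U ^ n - b ^ n := geom_sum₂_mul U b n
          have h4 : (∑ i ∈ Finset.range n, U ^ i * b ^ (n-1-i)) * (U - b)
              ≤ E * (U - b) := by rw [h3]; nlinarith
          exact le_of_mul_le_mul_right h4 hUb
        have hlim : (n:ℝ) * U ^ (n-1) ≤ E := by
          have hc2 : Continuous fun b : ℝ => ∑ i ∈ Finset.range n, U ^ i * b ^ (n-1-i) :=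
            continuous_finset_sum _ fun i _ => continuous_const.mul (continuous_pow _)
          have hval : (∑ i ∈ Finset.range n, U ^ i * U ^ (n-1-i)) = (n:ℝ) * U ^ (n-1) := by
            rw [Finset.sum_congr rfl (fun i hi => ?_)]
            · rw [Finset.sum_const, Finset.card_range, nsmul_eq_mul]
            · rw [← pow_add]
              congr 1
              have := Finset.mem_range.mp hi
              omega
          have h5 : Filter.Tendsto (fun b : ℝ => ∑ i ∈ Finset.range n, U ^ i * b ^ (n-1-i))
              (nhdsWithin U (Set.Iio U)) (nhds ((n:ℝ) * U ^ (n-1))) := by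
            have h6 := hc2.tendsto U
            rw [hval] at h6
            exact h6.mono_left nhdsWithin_le_nhds
          have hev : ∀ᶠ b in nhdsWithin U (Set.Iio U),
              (∑ i ∈ Finset.range n, U ^ i * b ^ (n-1-i)) ≤ E := by
            filter_upwards [eventually_mem_nhdsWithin,
              (eventually_gt_nhds hLU').filter_mono nhdsWithin_le_nhds] with b hb1 hb2
            exact hkey b hb2.le hb1
          exact le_of_tendsto h5 hev
        have hfin : (U ^ n - a ^ n) / E ≤ (U ^ n - a ^ n) / ((n:ℝ) * U ^ (n-1)) := by
          gcongr
        have e1 : (a ^ n - U ^ n) = -(U ^ n - a ^ n) := by ring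
        rw [e1, neg_div, neg_div]
        linarith
end

section
/- Let n ≥ 2 be an integer and let p = (p_0,…,p_{2n}) and q = (q_0,…,q_{2n}) be real coefficient vectors such that the n-th degree map R_{p,q} is contracting and (p_{n+1},…,p_{2n}) ≠ (1,1,…,1). Then for all reals L, U, a with 0 < L ≤ a ≤ U, x = a^n, and (x − L^n)·(∑_{i=0}^{n-1} (p_{n+1+i} − 1) L^{n-1-i} U^i) ≠ 0, the lower output L′ of R_{p,q} is strictly less than the Secant–Newton lower output L* = L + (x − L^n)/(∑_{i=0}^{n-1} L^{n-1-i} U^i); in particular the Secant–Newton output interval is a proper subset of the output interval of R_{p,q}. -/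
lemma auxG (n : ℕ) (U E b : ℝ) (hbU : b < U) (hE : E ≠ 0) (hEpos : 0 < E)
    (h3b : b ≤ U + (b ^ n - U ^ n) / E) :
    (∑ i ∈ Finset.range n, b ^ i * U ^ (n-1-i)) ≤ E := by
  set G : ℝ := ∑ i ∈ Finset.range n, b ^ i * U ^ (n-1-i) with hGdef
  clear_value G
  have hgb : b ^ n - U ^ n = (b - U) * G := by
    rw [hGdef, mul_comm]; exact (geom_sum₂_mul b U n).symm
  have hbU' : b - U < 0 := sub_neg.2 hbU
  have h5 : b - U ≤ (b - U) * (G / E) := by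
    rw [← mul_div_assoc, ← hgb]; linarith
  have h7 : G / E ≤ 1 := by
    by_contra hcon
    push_neg at hcon
    nlinarith [mul_pos (sub_pos.2 hcon) (neg_pos.2 hbU')]
  have h8 : G / E * E ≤ 1 * E := mul_le_mul_of_nonneg_right h7 hEpos.le
  rwa [div_mul_cancel₀ _ hE, one_mul] at h8

set_option maxHeartbeats 1600000 in
theorem secant_newton_strictly_better_lower (n : ℕ) (hn : 2 ≤ n) (p q : ℕ → ℝ)
    (hc : Contracting n p q) (hp : ∃ i < n, p (n+1+i) ≠ 1) :
    ∀ L U a : ℝ, 0 < L → L ≤ a → a ≤ U →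
      (a ^ n - L ^ n) * (∑ i ∈ Finset.range n, (p (n+1+i) - 1) * L ^ (n-1-i) * U ^ i) ≠ 0 →
      lowerOut n p L U (a ^ n) <
        L + (a ^ n - L ^ n) / (∑ i ∈ Finset.range n, L ^ (n-1-i) * U ^ i) ∧
      Set.Icc (L + (a ^ n - L ^ n) / (∑ i ∈ Finset.range n, L ^ (n-1-i) * U ^ i))
              (U + (a ^ n - U ^ n) / ((n : ℝ) * U ^ (n-1))) ⊂
        Set.Icc (lowerOut n p L U (a ^ n)) (upperOut n q L U (a ^ n)) := by
  intro L U a hL hLa haU hne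
  have hU : 0 < U := hL.trans_le (hLa.trans haU)
  have hmul := mul_ne_zero_iff.mp hne
  set D1 : ℝ := ∑ i ∈ Finset.range n, L ^ (n-1-i) * U ^ i with hD1def
  have hD1pos : 0 < D1 :=
    Finset.sum_pos (fun i _ => by positivity) (Finset.nonempty_range_iff.2 (by omega))
  have hsumcomm : D1 = ∑ i ∈ Finset.range n, U ^ i * L ^ (n-1-i) :=
    Finset.sum_congr rfl (fun i _ => mul_comm _ _)
  have hgeom : (U - L) * D1 = U ^ n - L ^ n := by
    rw [hsumcomm, mul_comm]; exact geom_sum₂_mul U L n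
  have hLa' : L < a := by
    rcases lt_or_eq_of_le hLa with h | h
    · exact h
    · exact absurd (by rw [h]; ring) hmul.1
  have hLU : L < U := hLa'.trans_le haU
  have hx : 0 < a ^ n - L ^ n := sub_pos.2 (pow_lt_pow_left₀ hLa' hL.le (by omega))
  set D : ℝ := ∑ i ∈ Finset.range n, p (n+1+i) * L ^ (n-1-i) * U ^ i with hDdef
  set S : ℝ := ∑ i ∈ Finset.range (n+1), p i * L ^ (n - i) * U ^ i with hSdef
  have hlo : ∀ x : ℝ, lowerOut n p L U x = L + (x + S) / D := fun x => rfl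
  have hdiff : (∑ i ∈ Finset.range n, (p (n+1+i) - 1) * L ^ (n-1-i) * U ^ i) = D - D1 := by
    rw [hDdef, hD1def, ← Finset.sum_sub_distrib]
    exact Finset.sum_congr rfl (fun i _ => by ring)
  set E : ℝ := ∑ i ∈ Finset.range n, q (n+1+i) * U ^ (n-1-i) * L ^ i with hEdef
  set T : ℝ := ∑ i ∈ Finset.range (n+1), q i * U ^ (n - i) * L ^ i with hTdef
  have hhi : ∀ x : ℝ, upperOut n q L U x = U + (x + T) / E := fun x => rfl
  clear_value D1 D S E T
  -- lower inequality
  have hlow : lowerOut n p L U (a ^ n) < L + (a ^ n - L ^ n) / D1 := by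
    have hRHS : 0 < (a ^ n - L ^ n) / D1 := div_pos hx hD1pos
    by_cases hD : D = 0
    · rw [hlo, hD, div_zero, add_zero]; linarith
    · obtain ⟨h1, h2, _, _⟩ := hc L U L hL le_rfl (hLa.trans haU)
      rw [hlo] at h1 h2
      have hSL : (L ^ n + S) / D = 0 := by linarith
      have hS : S = -L ^ n := by
        have := (div_eq_zero_iff.mp hSL).resolve_right hD
        linarith
      obtain ⟨h1a, h2a, _, _⟩ := hc L U a hL hLa haU
      rw [hlo, hS, ← sub_eq_add_neg] at h1a h2a
      have hq : 0 ≤ (a ^ n - L ^ n) / D := by linarith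
      have hDpos : 0 < D := by
        rcases div_nonneg_iff.mp hq with ⟨_, h⟩ | ⟨h, _⟩
        · exact lt_of_le_of_ne h (Ne.symm hD)
        · linarith
      obtain ⟨_, h2U, _, _⟩ := hc L U U hL (hLa.trans haU) le_rfl
      rw [hlo, hS, ← sub_eq_add_neg] at h2U
      have hUL : (U - L) * (D1 / D) ≤ U - L := by
        rw [← mul_div_assoc, hgeom]; linarith
      have h3 : D1 / D ≤ 1 := by
        have := mul_le_mul_of_nonneg_left (le_refl (1 : ℝ)) (le_of_lt (sub_pos.2 hLU))
        nlinarith [sub_pos.2 hLU]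
      have hD1D : D1 ≤ D := by
        have h4 : D1 / D * D ≤ 1 * D := mul_le_mul_of_nonneg_right h3 hDpos.le
        rwa [div_mul_cancel₀ _ hD, one_mul] at h4
      have hDne : D1 ≠ D := fun h => hmul.2 (by rw [hdiff, ← h, sub_self])
      have hlt : D1 < D := lt_of_le_of_ne hD1D hDne
      have hfin := div_lt_div_of_pos_left hx hD1pos hlt
      rw [hlo, hS, ← sub_eq_add_neg]
      linarith
  -- upper inequality
  have hnU : (0:ℝ) < (n:ℝ) * U ^ (n-1) := by
    have : (0:ℝ) < (n:ℝ) := by exact_mod_cast by omega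
    positivity
  have hxU : a ^ n - U ^ n ≤ 0 := sub_nonpos.2 (pow_le_pow_left₀ (hL.trans_le hLa).le haU n)
  have hup : U + (a ^ n - U ^ n) / ((n:ℝ) * U ^ (n-1)) ≤ upperOut n q L U (a ^ n) := by
    have hNewt : (a ^ n - U ^ n) / ((n:ℝ) * U ^ (n-1)) ≤ 0 :=
      div_nonpos_iff.mpr (Or.inr ⟨hxU, hnU.le⟩)
    by_cases hE : E = 0
    · rw [hhi, hE, div_zero, add_zero]; linarith
    · obtain ⟨_, _, h3, h4⟩ := hc L U U hL (hLa.trans haU) le_rfl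
      rw [hhi] at h3 h4
      have hT0 : (U ^ n + T) / E = 0 := by linarith
      have hT : T = -U ^ n := by
        have := (div_eq_zero_iff.mp hT0).resolve_right hE
        linarith
      obtain ⟨_, _, _, h4L⟩ := hc L U L hL le_rfl (hLa.trans haU)
      rw [hhi, hT, ← sub_eq_add_neg] at h4L
      have hqE : (L ^ n - U ^ n) / E ≤ 0 := by linarith
      have hLnUn : L ^ n - U ^ n < 0 := sub_neg.2 (pow_lt_pow_left₀ hLU hL.le (by omega))
      have hEpos : 0 < E := by
        rcases div_nonpos_iff.mp hqE with ⟨h, _⟩ | ⟨_, h⟩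
        · linarith
        · exact lt_of_le_of_ne h (Ne.symm hE)
      have hGle : ∀ b ∈ Set.Ico L U,
          (∑ i ∈ Finset.range n, b ^ i * U ^ (n-1-i)) ≤ E := by
        intro b hb
        obtain ⟨_, _, h3b, _⟩ := hc L U b hL hb.1 hb.2.le
        rw [hhi, hT, ← sub_eq_add_neg] at h3b
        exact auxG n U E b hb.2 hE hEpos h3b
      have hval : (∑ i ∈ Finset.range n, U ^ i * U ^ (n-1-i)) = (n:ℝ) * U ^ (n-1) := by
        have hc' : ∀ i ∈ Finset.range n, U ^ i * U ^ (n-1-i) = U ^ (n-1) := by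
          intro i hi
          rw [← pow_add]
          congr 1
          have := Finset.mem_range.mp hi
          omega
        rw [Finset.sum_congr rfl hc', Finset.sum_const, Finset.card_range, nsmul_eq_mul]
      have hlim : (n:ℝ) * U ^ (n-1) ≤ E := by
        have hcont : Filter.Tendsto
            (fun b : ℝ => ∑ i ∈ Finset.range n, b ^ i * U ^ (n-1-i))
            (nhdsWithin U (Set.Iio U)) (nhds ((n:ℝ) * U ^ (n-1))) := by
          rw [← hval]
          refine Filter.Tendsto.mono_left ?_ nhdsWithin_le_nhds
          exact tendsto_finset_sum _ fun i _ =>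
            (((continuous_pow i).tendsto U).mul_const _)
        have hev : ∀ᶠ b in nhdsWithin U (Set.Iio U),
            (∑ i ∈ Finset.range n, b ^ i * U ^ (n-1-i)) ≤ E :=
          Filter.eventually_of_mem (Ico_mem_nhdsLT_of_mem ⟨hLU, le_refl U⟩) hGle
        exact le_of_tendsto hcont hev
      have h9 : (U ^ n - a ^ n) / E ≤ (U ^ n - a ^ n) / ((n:ℝ) * U ^ (n-1)) :=
        div_le_div_of_nonneg_left (by linarith) hnU hlim
      rw [hhi, hT, ← sub_eq_add_neg]
      have e1 : (a ^ n - U ^ n) / E = -((U ^ n - a ^ n) / E) := by ring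
      have e2 : (a ^ n - U ^ n) / ((n:ℝ) * U ^ (n-1)) =
          -((U ^ n - a ^ n) / ((n:ℝ) * U ^ (n-1))) := by ring
      linarith [h9]
  obtain ⟨hl1, hl2, hl3, hl4⟩ := hc L U a hL hLa haU
  have hLU' : lowerOut n p L U (a ^ n) ≤ upperOut n q L U (a ^ n) := hl2.trans hl3
  refine ⟨hlow, ?_⟩
  rw [Set.ssubset_def]
  constructor
  · intro x hx'
    exact ⟨hlow.le.trans hx'.1, hx'.2.trans hup⟩
  · intro hcontra
    have := (hcontra ⟨le_refl _, hLU'⟩).1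
    linarith
end

section
/- Let n ≥ 2 be an integer and let p = (p_0,…,p_{2n}) and q = (q_0,…,q_{2n}) be real coefficient vectors such that the n-th degree map R_{p,q} is contracting and (q_{n+1},…,q_{2n}) ≠ (n,0,…,0). Then for all reals L, U, a with 0 < L ≤ a ≤ U, x = a^n, and (x − U^n)·((q_{n+1} − n) U^{n-1} + ∑_{i=1}^{n-1} q_{n+1+i} U^{n-1-i} L^i) ≠ 0, the upper output U′ of R_{p,q} is strictly greater than the Secant–Newton upper output U* = U + (x − U^n)/(n·U^{n-1}); in particular the Secant–Newton output interval is a proper subset of the output interval of R_{p,q}. -/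
theorem secant_newton_strictly_better_upper (n : ℕ) (hn : 2 ≤ n) (p q : ℕ → ℝ)
    (hc : Contracting n p q)
    (hq : ¬ (q (n+1) = (n : ℝ) ∧ ∀ i : ℕ, 1 ≤ i → i ≤ n - 1 → q (n+1+i) = 0)) :
    ∀ L U a : ℝ, 0 < L → L ≤ a → a ≤ U →
      (a ^ n - U ^ n) *
        ((q (n+1) - (n : ℝ)) * U ^ (n-1) +
          ∑ i ∈ Finset.Ico 1 n, q (n+1+i) * U ^ (n-1-i) * L ^ i) ≠ 0 →
      U + (a ^ n - U ^ n) / ((n : ℝ) * U ^ (n-1)) < upperOut n q L U (a ^ n) ∧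
      Set.Icc (L + (a ^ n - L ^ n) / (∑ i ∈ Finset.range n, L ^ (n-1-i) * U ^ i))
              (U + (a ^ n - U ^ n) / ((n : ℝ) * U ^ (n-1))) ⊂
        Set.Icc (lowerOut n p L U (a ^ n)) (upperOut n q L U (a ^ n)) := by
  intro L U a hL hLa haU hside
  have hx : a ^ n - U ^ n ≠ 0 := left_ne_zero_of_mul hside
  have hDfac : (q (n+1) - (n : ℝ)) * U ^ (n-1) +
      ∑ i ∈ Finset.Ico 1 n, q (n+1+i) * U ^ (n-1-i) * L ^ i ≠ 0 :=
    right_ne_zero_of_mul hside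
  have ha : 0 < a := hL.trans_le hLa
  have hU : 0 < U := ha.trans_le haU
  have haU' : a < U := lt_of_le_of_ne haU (fun h => hx (by rw [h, sub_self]))
  have hLU : L < U := lt_of_le_of_lt hLa haU'
  have hxlt : a ^ n < U ^ n := pow_lt_pow_left₀ haU' ha.le (by omega)
  have hLxlt : L ^ n < U ^ n := pow_lt_pow_left₀ hLU hL.le (by omega)
  have hnpos : (0:ℝ) < (n:ℝ) := by positivity
  have hUpow : (0:ℝ) < U ^ (n-1) := pow_pos hU _
  have hnU : (0:ℝ) < (n:ℝ) * U ^ (n-1) := mul_pos hnpos hUpow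
  set D := ∑ i ∈ Finset.range n, q (n+1+i) * U ^ (n-1-i) * L ^ i with hD
  set S := ∑ i ∈ Finset.range (n+1), q i * U ^ (n-i) * L ^ i with hS
  have hupEq : ∀ x : ℝ, upperOut n q L U x = U + (x + S) / D := fun x => rfl
  -- D split into first term and the rest
  have hsplit : D = q (n+1) * U ^ (n-1) +
      ∑ i ∈ Finset.Ico 1 n, q (n+1+i) * U ^ (n-1-i) * L ^ i := by
    rw [hD, Finset.range_eq_Ico, Finset.sum_eq_sum_Ico_succ_bot (by omega)]
    simp
  have hDne : D ≠ (n:ℝ) * U ^ (n-1) := by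
    intro h
    apply hDfac
    have : (q (n+1) - (n:ℝ)) * U ^ (n-1) +
        ∑ i ∈ Finset.Ico 1 n, q (n+1+i) * U ^ (n-1-i) * L ^ i
        = D - (n:ℝ) * U ^ (n-1) := by rw [hsplit]; ring
    rw [this, h, sub_self]
  -- from a = U instance: (U^n + S)/D = 0
  have hUU := hc L U U hL (hLa.trans haU) le_rfl
  have h0 : (U ^ n + S) / D = 0 := by
    have h1 := hUU.2.2.1
    have h2 := hUU.2.2.2
    rw [hupEq] at h1 h2
    linarith
  -- handy: a-instance of contraction
  have hca := hc L U a hL hLa haU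
  -- first part
  have part1 : U + (a ^ n - U ^ n) / ((n:ℝ) * U ^ (n-1)) < upperOut n q L U (a ^ n) := by
    rcases eq_or_ne D 0 with hD0 | hD0
    · rw [hupEq, hD0, div_zero, add_zero]
      have : (a ^ n - U ^ n) / ((n:ℝ) * U ^ (n-1)) < 0 :=
        div_neg_of_neg_of_pos (by linarith) hnU
      linarith
    · have hSval : S = -U ^ n := by
        rcases (div_eq_zero_iff.mp h0) with h | h
        · linarith
        · exact absurd h hD0
      have hU' : ∀ x : ℝ, upperOut n q L U x = U + (x - U ^ n) / D := by
        intro x; rw [hupEq, hSval]; ring_nf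
      -- D > 0
      have hDpos : 0 < D := by
        have h2 := hca.2.2.2
        rw [hU'] at h2
        have hq2 : (a ^ n - U ^ n) / D ≤ 0 := by linarith
        rcases hD0.lt_or_gt with h | h
        · exfalso
          have : 0 < (a ^ n - U ^ n) / D := div_pos_of_neg_of_neg (by linarith) h
          linarith
        · exact h
      -- key bound for all a' in [L,U)
      have hkey : ∀ a' ∈ Set.Ico L U,
          (∑ i ∈ Finset.range n, a' ^ i * U ^ (n-1-i)) ≤ D := by
        intro a' ha'
        have h5 := (hc L U a' hL ha'.1 ha'.2.le).2.2.1
        rw [hU'] at h5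
        have h6 : a' - U ≤ (a' ^ n - U ^ n) / D := by linarith
        have h7 : (a' - U) * D ≤ a' ^ n - U ^ n := (le_div_iff₀ hDpos).mp h6
        have h8 := geom_sum₂_mul a' U n
        have h9 : a' - U < 0 := by linarith [ha'.2]
        nlinarith [h7, h8, h9]
      have hfc : Continuous (fun t : ℝ => ∑ i ∈ Finset.range n, t ^ i * U ^ (n-1-i)) :=
        continuous_finset_sum _ fun i _ => (continuous_pow i).mul continuous_const
      have hne : (nhdsWithin U (Set.Ico L U)).NeBot := by
        rw [← mem_closure_iff_nhdsWithin_neBot, closure_Ico hLU.ne]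
        exact ⟨hLU.le, le_rfl⟩
      have hDa : (∑ i ∈ Finset.range n, U ^ i * U ^ (n-1-i)) ≤ D :=
        le_of_tendsto (hfc.continuousWithinAt)
          (eventually_nhdsWithin_of_forall hkey)
      have hfU : (∑ i ∈ Finset.range n, U ^ i * U ^ (n-1-i)) = (n:ℝ) * U ^ (n-1) := by
        rw [Finset.sum_congr rfl (fun i hi => ?_), Finset.sum_const, Finset.card_range,
          nsmul_eq_mul]
        rw [← pow_add]
        congr 1
        have := Finset.mem_range.mp hi
        omega
      have hDgt : (n:ℝ) * U ^ (n-1) < D := lt_of_le_of_ne (hfU ▸ hDa) (Ne.symm hDne)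
      have hlt : (U ^ n - a ^ n) / D < (U ^ n - a ^ n) / ((n:ℝ) * U ^ (n-1)) :=
        div_lt_div_of_pos_left (by linarith) hnU hDgt
      have e1 : (a ^ n - U ^ n) / D = -((U ^ n - a ^ n) / D) := by ring
      have e2 : (a ^ n - U ^ n) / ((n:ℝ) * U ^ (n-1))
          = -((U ^ n - a ^ n) / ((n:ℝ) * U ^ (n-1))) := by ring
      rw [hU']
      rw [e1] at *
      linarith [hlt, e2]
  refine ⟨part1, ?_⟩
  -- lower side
  set Dp := ∑ i ∈ Finset.range n, p (n+1+i) * L ^ (n-1-i) * U ^ i with hDp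
  set Sp := ∑ i ∈ Finset.range (n+1), p i * L ^ (n-i) * U ^ i with hSp
  have hloEq : ∀ x : ℝ, lowerOut n p L U x = L + (x + Sp) / Dp := fun x => rfl
  set E := ∑ i ∈ Finset.range n, L ^ (n-1-i) * U ^ i with hE
  have hEpos : 0 < E := by
    rw [hE]
    apply Finset.sum_pos (fun i _ => by positivity)
    exact Finset.nonempty_range_iff.mpr (by omega)
  have hxgeL : L ^ n ≤ a ^ n := pow_le_pow_left₀ hL.le hLa n
  -- from a = L instance: (L^n + Sp)/Dp = 0
  have hLL := hc L U L hL le_rfl (hLa.trans haU)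
  have hp0 : (L ^ n + Sp) / Dp = 0 := by
    have h1 := hLL.1
    have h2 := hLL.2.1
    rw [hloEq] at h1 h2
    linarith
  have hlow : lowerOut n p L U (a ^ n) ≤ L + (a ^ n - L ^ n) / E := by
    rcases eq_or_ne Dp 0 with hDp0 | hDp0
    · rw [hloEq, hDp0, div_zero, add_zero]
      have : 0 ≤ (a ^ n - L ^ n) / E := div_nonneg (by linarith) hEpos.le
      linarith
    · have hSval : Sp = -L ^ n := by
        rcases (div_eq_zero_iff.mp hp0) with h | h
        · linarith
        · exact absurd h hDp0
      have hL' : ∀ x : ℝ, lowerOut n p L U x = L + (x - L ^ n) / Dp := by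
        intro x; rw [hloEq, hSval]; ring_nf
      have hcu := hc L U U hL (hLa.trans haU) le_rfl
      have h1 := hcu.1
      have h2 := hcu.2.1
      rw [hL'] at h1 h2
      have hDppos : 0 < Dp := by
        rcases hDp0.lt_or_gt with h | h
        · exfalso
          have : (U ^ n - L ^ n) / Dp < 0 := div_neg_of_pos_of_neg (by linarith) h
          linarith
        · exact h
      -- Dp ≥ E
      have h7 : (U ^ n - L ^ n) ≤ (U - L) * Dp := by
        have : (U ^ n - L ^ n) / Dp ≤ U - L := by linarith
        calc U ^ n - L ^ n = (U ^ n - L ^ n) / Dp * Dp := by field_simp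
        _ ≤ (U - L) * Dp := by
            apply mul_le_mul_of_nonneg_right this hDppos.le
      have hEeq : E * (U - L) = U ^ n - L ^ n := by
        rw [hE, show (∑ i ∈ Finset.range n, L ^ (n-1-i) * U ^ i)
            = ∑ i ∈ Finset.range n, U ^ i * L ^ (n-1-i) from
          Finset.sum_congr rfl (fun i _ => mul_comm _ _)]
        exact geom_sum₂_mul U L n
      have hEDp : E ≤ Dp := by
        have h9 : E * (U - L) ≤ Dp * (U - L) := by linarith
        exact le_of_mul_le_mul_right h9 (sub_pos.mpr hLU)
      rw [hL']
      have : (a ^ n - L ^ n) / Dp ≤ (a ^ n - L ^ n) / E :=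
        div_le_div_of_nonneg_left (by linarith) hEpos hEDp
      linarith
  have hsub : Set.Icc (L + (a ^ n - L ^ n) / E) (U + (a ^ n - U ^ n) / ((n:ℝ) * U ^ (n-1)))
      ⊆ Set.Icc (lowerOut n p L U (a ^ n)) (upperOut n q L U (a ^ n)) :=
    Set.Icc_subset_Icc hlow part1.le
  rw [Set.ssubset_iff_of_subset hsub]
  refine ⟨upperOut n q L U (a ^ n), ⟨hca.2.1.trans hca.2.2.1, le_rfl⟩, ?_⟩
  intro hmem
  exact absurd hmem.2 (not_le.mpr part1)
end

section
/- Let n ≥ 2 be an integer and let p = (p_0,…,p_{2n}) and q = (q_0,…,q_{2n}) be real coefficient vectors such that the n-th degree map R_{p,q} is contracting and R_{p,q} is not the Secant–Newton map (i.e. p ≠ p* or q ≠ q*, where p* = (−1,0,…,0,1,…,1) with n zeros followed by n ones, and q* = (−1,0,…,0,n,0,…,0) with n zeros before the entry n and n−1 zeros after). Then the set of triples (L, U, a) ∈ ℝ³ with 0 < L ≤ a ≤ U for which the output interval of R_{p,q} on ([L,U], a^n) equals the output interval of the Secant–Newton map has Lebesgue measure zero in ℝ³; consequently, for almost every (L,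 U, a) with 0 < L ≤ a ≤ U, the Secant–Newton output interval is a proper subset of the output interval of R_{p,q}. -/
/-- The coefficient vector `p*` of the Secant–Newton map:
`p* = (-1, 0,…,0, 1,…,1)` with `n` zeros and `n` ones. -/
noncomputable def pstar (n : ℕ) : ℕ → ℝ :=
  fun i => if i = 0 then -1 else if i ≤ n then 0 else 1

/-- The coefficient vector `q*` of the Secant–Newton map:
`q* = (-1, 0,…,0, n, 0,…,0)` with `n` zeros before `n` and `n-1` zeros after. -/
noncomputable def qstar (n : ℕ) : ℕ → ℝ :=
  fun i => if i = 0 then -1 else if i = n + 1 then (n : ℝ) else 0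

open Finset MeasureTheory Set Filter

noncomputable def DS (n : ℕ) (L U : ℝ) : ℝ := ∑ i ∈ Finset.range n, L ^ (n-1-i) * U ^ i

lemma DS_mul (n : ℕ) (L U : ℝ) : DS n L U * (U - L) = U ^ n - L ^ n := by
  rw [← geom_sum₂_mul U L n, DS]
  congr 1
  exact Finset.sum_congr rfl fun i _ => mul_comm _ _

lemma DS_pos {n : ℕ} (hn : 0 < n) {L U : ℝ} (hL : 0 < L) (hU : 0 < U) : 0 < DS n L U :=
  Finset.sum_pos (fun i _ => mul_pos (pow_pos hL _) (pow_pos hU _))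
    (by simp [Finset.nonempty_range_iff, hn.ne'])

lemma DS_mono_right (n : ℕ) {L a U : ℝ} (hL : 0 ≤ L) (ha : 0 ≤ a) (h : a ≤ U) :
    DS n L a ≤ DS n L U :=
  Finset.sum_le_sum fun i _ => mul_le_mul_of_nonneg_left (pow_le_pow_left₀ ha h i) (pow_nonneg hL _)

lemma DS_mono_left (n : ℕ) {a U : ℝ} (ha : 0 ≤ a) (h : a ≤ U) : DS n a U ≤ DS n U U :=
  Finset.sum_le_sum fun i _ =>
    mul_le_mul_of_nonneg_right (pow_le_pow_left₀ ha h _) (pow_nonneg (ha.trans h) _)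

lemma DS_diag (n : ℕ) (U : ℝ) : DS n U U = n * U ^ (n-1) := by
  rw [DS, Finset.sum_congr rfl (fun i hi => ?_), Finset.sum_const, Finset.card_range,
    nsmul_eq_mul]
  rw [← pow_add]
  congr 1
  have : i < n := Finset.mem_range.mp hi
  omega

lemma Np_star (n : ℕ) (L U : ℝ) :
    ∑ i ∈ Finset.range (n+1), pstar n i * L ^ (n-i) * U ^ i = -L^n := by
  rw [Finset.sum_eq_single 0 (fun i hi hne => ?_) (by simp)]
  · simp [pstar]
  · have h1 : i ≤ n := by have := Finset.mem_range.mp hi; omega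
    simp [pstar, hne, h1]

lemma Dp_star (n : ℕ) (L U : ℝ) :
    ∑ i ∈ Finset.range n, pstar n (n+1+i) * L ^ (n-1-i) * U ^ i = DS n L U := by
  rw [DS]
  refine Finset.sum_congr rfl fun i _ => ?_
  have h1 : ¬ (n + 1 + i = 0) := by omega
  have h2 : ¬ (n + 1 + i ≤ n) := by omega
  simp [pstar, h1, h2]

lemma Nq_star (n : ℕ) (L U : ℝ) :
    ∑ i ∈ Finset.range (n+1), qstar n i * U ^ (n-i) * L ^ i = -U^n := by
  rw [Finset.sum_eq_single 0 (fun i hi hne => ?_) (by simp)]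
  · simp [qstar]
  · have h1 : ¬ (i = n + 1) := by have := Finset.mem_range.mp hi; omega
    simp [qstar, hne, h1]

lemma Dq_star (n : ℕ) (L U : ℝ) :
    ∑ i ∈ Finset.range n, qstar n (n+1+i) * U ^ (n-1-i) * L ^ i = n * U ^ (n-1) := by
  rw [Finset.sum_eq_single 0 (fun i hi hne => ?_) (fun h => by simp_all [qstar])]
  · have h1 : ¬ (n + 1 + 0 = 0) := by omega
    simp [qstar, h1]
  · have h1 : ¬ (n + 1 + i = 0) := by omega
    have h2 : ¬ (n + 1 + i = n + 1) := by omega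
    simp [qstar, h1, h2, hne]

lemma lowerOut_star (n : ℕ) (L U x : ℝ) :
    lowerOut n (pstar n) L U x = L + (x - L^n) / DS n L U := by
  rw [lowerOut, Np_star, Dp_star, sub_eq_add_neg]

lemma upperOut_star (n : ℕ) (L U x : ℝ) :
    upperOut n (qstar n) L U x = U + (x - U^n) / (n * U ^ (n-1)) := by
  rw [upperOut, Nq_star, Dq_star, sub_eq_add_neg]

section Core

variable {n : ℕ} {p q : ℕ → ℝ} {L U : ℝ}

lemma lower_core (hn : 2 ≤ n) (hc : Contracting n p q) (hL : 0 < L) (hLU : L < U) :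
    (∑ i ∈ Finset.range n, p (n+1+i) * L ^ (n-1-i) * U ^ i = 0) ∨
    ((∑ i ∈ Finset.range (n+1), p i * L ^ (n-i) * U ^ i) = -L^n ∧
      DS n L U ≤ ∑ i ∈ Finset.range n, p (n+1+i) * L ^ (n-1-i) * U ^ i) := by
  set D := ∑ i ∈ Finset.range n, p (n+1+i) * L ^ (n-1-i) * U ^ i with hDdef
  set N := ∑ i ∈ Finset.range (n+1), p i * L ^ (n-i) * U ^ i with hNdef
  by_cases hD : D = 0
  · exact Or.inl hD
  right
  have h1 := hc L U L hL le_rfl hLU.le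
  simp only [lowerOut, ← hDdef, ← hNdef] at h1
  have hq1 : (L^n + N)/D = 0 := by linarith [h1.1, h1.2.1]
  have hN : N = -L^n := by
    have := (div_eq_zero_iff.mp hq1).resolve_right hD
    linarith
  refine ⟨hN, ?_⟩
  have h2 := hc L U U hL hLU.le le_rfl
  simp only [lowerOut, ← hDdef, ← hNdef, hN] at h2
  have hpow : L^n < U^n := pow_lt_pow_left₀ hLU hL.le (by omega)
  have e1 : U^n + -L^n = U^n - L^n := by ring
  rw [e1] at h2
  have hDpos : 0 < D := by
    rcases lt_or_gt_of_ne hD with h | h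
    · exfalso
      have : (U^n - L^n)/D < 0 := div_neg_of_pos_of_neg (by linarith) h
      linarith [h2.1]
    · exact h
  have hle : (U^n - L^n)/D ≤ U - L := by linarith [h2.2.1]
  have h3 : U^n - L^n ≤ (U - L) * D := (div_le_iff₀ hDpos).mp hle
  have h4 : DS n L U * (U - L) ≤ D * (U - L) := by
    rw [DS_mul]; linarith [mul_comm (U - L) D]
  exact le_of_mul_le_mul_right h4 (sub_pos.mpr hLU)

lemma upper_core (hn : 2 ≤ n) (hc : Contracting n p q) (hL : 0 < L) (hLU : L < U) :
    (∑ i ∈ Finset.range n, q (n+1+i) * U ^ (n-1-i) * L ^ i = 0) ∨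
    ((∑ i ∈ Finset.range (n+1), q i * U ^ (n-i) * L ^ i) = -U^n ∧
      (n : ℝ) * U ^ (n-1) ≤ ∑ i ∈ Finset.range n, q (n+1+i) * U ^ (n-1-i) * L ^ i) := by
  set D := ∑ i ∈ Finset.range n, q (n+1+i) * U ^ (n-1-i) * L ^ i with hDdef
  set N := ∑ i ∈ Finset.range (n+1), q i * U ^ (n-i) * L ^ i with hNdef
  by_cases hD : D = 0
  · exact Or.inl hD
  right
  have h2 := hc L U U hL hLU.le le_rfl
  simp only [upperOut, ← hDdef, ← hNdef] at h2
  have hq1 : (U^n + N)/D = 0 := by linarith [h2.2.2.1, h2.2.2.2]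
  have hN : N = -U^n := by
    have := (div_eq_zero_iff.mp hq1).resolve_right hD
    linarith
  refine ⟨hN, ?_⟩
  have hpow : L^n < U^n := pow_lt_pow_left₀ hLU hL.le (by omega)
  have hDpos : 0 < D := by
    rcases lt_or_gt_of_ne hD with h | h
    · exfalso
      have h1 := hc L U L hL le_rfl hLU.le
      simp only [upperOut, ← hDdef, ← hNdef, hN] at h1
      have e1 : L^n + -U^n = L^n - U^n := by ring
      rw [e1] at h1
      have : 0 < (L^n - U^n)/D := div_pos_of_neg_of_neg (by linarith) h
      linarith [h1.2.2.2]
    · exact h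
  have key : ∀ a : ℝ, L ≤ a → a < U → DS n a U ≤ D := by
    intro a ha haU
    have h3 := hc L U a hL ha haU.le
    simp only [upperOut, ← hDdef, ← hNdef, hN] at h3
    have e1 : a^n + -U^n = a^n - U^n := by ring
    rw [e1] at h3
    have h4 : (a - U) ≤ (a^n - U^n)/D := by linarith [h3.2.2.1]
    have h5 : (a - U) * D ≤ a^n - U^n := (le_div_iff₀ hDpos).mp h4
    have h6 : U^n - a^n ≤ (U - a) * D := by nlinarith
    have h7 : DS n a U * (U - a) ≤ D * (U - a) := by
      rw [DS_mul]; linarith [mul_comm (U - a) D]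
    exact le_of_mul_le_mul_right h7 (sub_pos.mpr haU)
  have hcont : Continuous fun a : ℝ => DS n a U := by
    simp only [DS]
    exact continuous_finset_sum _ fun i _ => (continuous_pow _).mul continuous_const
  have hlim : Tendsto (fun a : ℝ => DS n a U) (nhdsWithin U (Set.Iio U)) (nhds (DS n U U)) :=
    (hcont.tendsto U).mono_left nhdsWithin_le_nhds
  have : DS n U U ≤ D :=
    le_of_tendsto hlim (Filter.eventually_of_mem (Ioo_mem_nhdsLT hLU)
      (fun a ha => key a ha.1.le ha.2))
  rwa [DS_diag] at this

lemma lower_le (hn : 2 ≤ n) (hc : Contracting n p q) (hL : 0 < L) {a : ℝ}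
    (hLa : L ≤ a) (haU : a ≤ U) (hLU : L < U) :
    lowerOut n p L U (a^n) ≤ lowerOut n (pstar n) L U (a^n) := by
  rw [lowerOut_star]
  have hDS := DS_pos (n := n) (by omega) hL (hL.trans hLU)
  have hnum : 0 ≤ a^n - L^n := sub_nonneg.mpr (pow_le_pow_left₀ hL.le hLa n)
  rcases lower_core hn hc hL hLU with h | ⟨hN, hD⟩
  · rw [lowerOut, h, div_zero, add_zero]
    have : 0 ≤ (a^n - L^n)/DS n L U := div_nonneg hnum hDS.le
    linarith
  · rw [lowerOut, hN]
    have e1 : a^n + -L^n = a^n - L^n := by ring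
    rw [e1]
    have := div_le_div_of_nonneg_left hnum hDS hD
    linarith

lemma upper_le (hn : 2 ≤ n) (hc : Contracting n p q) (hL : 0 < L) {a : ℝ}
    (hLa : L ≤ a) (haU : a ≤ U) (hLU : L < U) :
    upperOut n (qstar n) L U (a^n) ≤ upperOut n q L U (a^n) := by
  rw [upperOut_star]
  have hU : 0 < U := hL.trans hLU
  have hDS : 0 < (n : ℝ) * U ^ (n-1) := by positivity
  have hnum : 0 ≤ U^n - a^n := sub_nonneg.mpr (pow_le_pow_left₀ (hL.le.trans hLa) haU n)
  have e2 : (a^n - U^n) / ((n:ℝ) * U ^ (n-1)) = -((U^n - a^n) / ((n:ℝ) * U ^ (n-1))) := by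
    ring
  rcases upper_core hn hc hL hLU with h | ⟨hN, hD⟩
  · rw [upperOut, h, div_zero, add_zero]
    have : 0 ≤ (U^n - a^n)/((n:ℝ) * U ^ (n-1)) := div_nonneg hnum hDS.le
    linarith
  · rw [upperOut, hN]
    have e1 : a^n + -U^n = -(U^n - a^n) := by ring
    rw [e1]
    have := div_le_div_of_nonneg_left hnum hDS hD
    have e3 : -(U^n - a^n) / (∑ i ∈ Finset.range n, q (n+1+i) * U ^ (n-1-i) * L ^ i)
        = -((U^n - a^n) / (∑ i ∈ Finset.range n, q (n+1+i) * U ^ (n-1-i) * L ^ i)) := by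
      ring
    rw [e3]
    linarith

lemma lower_eq (hn : 2 ≤ n) (hc : Contracting n p q) (hL : 0 < L) {a : ℝ}
    (hLa : L < a) (haU : a ≤ U)
    (heq : lowerOut n p L U (a^n) = lowerOut n (pstar n) L U (a^n)) :
    (∑ i ∈ Finset.range (n+1), p i * L ^ (n-i) * U ^ i) = -L^n ∧
    (∑ i ∈ Finset.range n, p (n+1+i) * L ^ (n-1-i) * U ^ i) = DS n L U := by
  have hLU : L < U := hLa.trans_le haU
  have hDS := DS_pos (n := n) (by omega) hL (hL.trans hLU)
  have hnum : 0 < a^n - L^n := sub_pos.mpr (pow_lt_pow_left₀ hLa hL.le (by omega))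
  rw [lowerOut_star] at heq
  rcases lower_core hn hc hL hLU with h | ⟨hN, hD⟩
  · exfalso
    rw [lowerOut, h, div_zero, add_zero] at heq
    have : (a^n - L^n)/DS n L U = 0 := by linarith
    rcases div_eq_zero_iff.mp this with h' | h'
    · linarith
    · linarith
  · refine ⟨hN, ?_⟩
    rw [lowerOut, hN] at heq
    have e1 : a^n + -L^n = a^n - L^n := by ring
    rw [e1] at heq
    set D := ∑ i ∈ Finset.range n, p (n+1+i) * L ^ (n-1-i) * U ^ i
    have hDpos : 0 < D := lt_of_lt_of_le hDS hD
    have h2 : (a^n - L^n)/D = (a^n - L^n)/DS n L U := by linarith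
    rw [div_eq_div_iff hDpos.ne' hDS.ne'] at h2
    exact (mul_left_cancel₀ hnum.ne' h2).symm

lemma upper_eq (hn : 2 ≤ n) (hc : Contracting n p q) (hL : 0 < L) {a : ℝ}
    (hLa : L ≤ a) (haU : a < U)
    (heq : upperOut n q L U (a^n) = upperOut n (qstar n) L U (a^n)) :
    (∑ i ∈ Finset.range (n+1), q i * U ^ (n-i) * L ^ i) = -U^n ∧
    (∑ i ∈ Finset.range n, q (n+1+i) * U ^ (n-1-i) * L ^ i) = n * U ^ (n-1) := by
  have hLU : L < U := hLa.trans_lt haU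
  have hU : 0 < U := hL.trans hLU
  have hDS : 0 < (n : ℝ) * U ^ (n-1) := by positivity
  have hnum : 0 < U^n - a^n := sub_pos.mpr (pow_lt_pow_left₀ haU (hL.le.trans hLa) (by omega))
  rw [upperOut_star] at heq
  rcases upper_core hn hc hL hLU with h | ⟨hN, hD⟩
  · exfalso
    rw [upperOut, h, div_zero, add_zero] at heq
    have : (a^n - U^n)/((n:ℝ) * U ^ (n-1)) = 0 := by linarith
    rcases div_eq_zero_iff.mp this with h' | h'
    · linarith
    · linarith
  · refine ⟨hN, ?_⟩
    rw [upperOut, hN] at heq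
    have e1 : a^n + -U^n = a^n - U^n := by ring
    rw [e1] at heq
    set D := ∑ i ∈ Finset.range n, q (n+1+i) * U ^ (n-1-i) * L ^ i
    have hDpos : 0 < D := lt_of_lt_of_le hDS hD
    have h2 : (a^n - U^n)/D = (a^n - U^n)/((n:ℝ) * U ^ (n-1)) := by linarith
    rw [div_eq_div_iff hDpos.ne' hDS.ne'] at h2
    have hnum' : a^n - U^n ≠ 0 := by linarith
    exact (mul_left_cancel₀ hnum' h2).symm

lemma star_lower_bounds (hn : 2 ≤ n) (hL : 0 < L) {a : ℝ} (hLa : L ≤ a) (haU : a ≤ U) :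
    L ≤ lowerOut n (pstar n) L U (a^n) ∧ lowerOut n (pstar n) L U (a^n) ≤ a := by
  rw [lowerOut_star]
  have hU : 0 < U := lt_of_lt_of_le hL (hLa.trans haU)
  have hDS := DS_pos (n := n) (by omega) hL hU
  have hnum : 0 ≤ a^n - L^n := sub_nonneg.mpr (pow_le_pow_left₀ hL.le hLa n)
  constructor
  · have : 0 ≤ (a^n - L^n)/DS n L U := div_nonneg hnum hDS.le
    linarith
  · have h1 : a^n - L^n ≤ (a - L) * DS n L U := by
      have := DS_mul n L a
      have h2 : DS n L a ≤ DS n L U := DS_mono_right n hL.le (hL.le.trans hLa) haU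
      nlinarith [sub_nonneg.mpr hLa]
    have : (a^n - L^n)/DS n L U ≤ a - L := (div_le_iff₀ hDS).mpr (by linarith [mul_comm (a - L) (DS n L U)])
    linarith

lemma star_upper_bounds (hn : 2 ≤ n) (hL : 0 < L) {a : ℝ} (hLa : L ≤ a) (haU : a ≤ U) :
    a ≤ upperOut n (qstar n) L U (a^n) ∧ upperOut n (qstar n) L U (a^n) ≤ U := by
  rw [upperOut_star]
  have hU : 0 < U := lt_of_lt_of_le hL (hLa.trans haU)
  have ha : 0 ≤ a := hL.le.trans hLa
  have hDS : 0 < (n : ℝ) * U ^ (n-1) := by positivity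
  have hnum : 0 ≤ U^n - a^n := sub_nonneg.mpr (pow_le_pow_left₀ ha haU n)
  have e2 : (a^n - U^n) / ((n:ℝ) * U ^ (n-1)) = -((U^n - a^n) / ((n:ℝ) * U ^ (n-1))) := by
    ring
  constructor
  · have h1 : U^n - a^n ≤ (U - a) * ((n:ℝ) * U ^ (n-1)) := by
      have := DS_mul n a U
      have h2 : DS n a U ≤ (n:ℝ) * U ^ (n-1) := by
        rw [← DS_diag]; exact DS_mono_left n ha haU
      nlinarith [sub_nonneg.mpr haU]
    have : (U^n - a^n)/((n:ℝ) * U ^ (n-1)) ≤ U - a :=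
      (div_le_iff₀ hDS).mpr (by linarith [mul_comm (U - a) ((n:ℝ) * U ^ (n-1))])
    rw [e2] at *
    linarith
  · have : 0 ≤ (U^n - a^n)/((n:ℝ) * U ^ (n-1)) := div_nonneg hnum hDS.le
    rw [e2]
    linarith

end Core

section Null

lemma null_poly (m : ℕ) (c : ℕ → ℝ) (e : ℕ → ℕ) (hex : ∃ i, i < m ∧ c i ≠ 0) :
    volume {v : ℝ × ℝ × ℝ |
      ∑ i ∈ Finset.range m, c i * v.1 ^ e i * v.2.1 ^ i = 0} = 0 := by
  obtain ⟨i0, hi0, hc0⟩ := hex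
  set S := {v : ℝ × ℝ × ℝ | ∑ i ∈ Finset.range m, c i * v.1 ^ e i * v.2.1 ^ i = 0} with hS
  have hcont : Continuous fun v : ℝ × ℝ × ℝ =>
      ∑ i ∈ Finset.range m, c i * v.1 ^ e i * v.2.1 ^ i :=
    continuous_finset_sum _ fun i _ =>
      (continuous_const.mul (continuous_fst.pow _)).mul
        ((continuous_fst.comp continuous_snd).pow _)
  have hmeas : MeasurableSet S :=
    measurableSet_eq_fun hcont.measurable measurable_const
  rw [show (volume : Measure (ℝ × ℝ × ℝ)) = (volume : Measure ℝ).prod volume from rfl,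
    Measure.measure_prod_null hmeas]
  have h0 : ∀ᵐ L : ℝ, L ≠ 0 := by
    rw [ae_iff]
    simp only [ne_eq, not_not]
    simpa [Set.setOf_eq_eq_singleton] using (measure_singleton (0 : ℝ))
  filter_upwards [h0] with L hL
  have hslice : (Prod.mk L ⁻¹' S) =
      {u : ℝ | ∑ i ∈ Finset.range m, c i * L ^ e i * u ^ i = 0} ×ˢ (Set.univ : Set ℝ) := by
    ext ⟨u, a⟩
    simp [hS, Set.mem_prod]
  have hz : volume {u : ℝ | ∑ i ∈ Finset.range m, c i * L ^ e i * u ^ i = 0} = 0 := by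
    set P : Polynomial ℝ :=
      ∑ i ∈ Finset.range m, Polynomial.C (c i * L ^ e i) * Polynomial.X ^ i with hP
    have hco : P.coeff i0 = c i0 * L ^ e i0 := by
      rw [hP, Polynomial.finset_sum_coeff]
      simp only [Polynomial.coeff_C_mul, Polynomial.coeff_X_pow, mul_ite, mul_one, mul_zero]
      rw [Finset.sum_ite_eq (Finset.range m) i0 (fun j => c j * L ^ e j)]
      exact if_pos (Finset.mem_range.mpr hi0)
    have hPne : P ≠ 0 := by
      intro h
      rw [h, Polynomial.coeff_zero] at hco
      exact (mul_ne_zero hc0 (pow_ne_zero _ hL)) hco.symm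
    have hsets : {u : ℝ | ∑ i ∈ Finset.range m, c i * L ^ e i * u ^ i = 0}
        = {x : ℝ | P.IsRoot x} := by
      ext u
      simp [Polynomial.IsRoot, hP, Polynomial.eval_finset_sum]
    rw [hsets]
    exact (Polynomial.finite_setOf_isRoot hPne).measure_zero _
  show volume (Prod.mk L ⁻¹' S) = 0
  rw [hslice,
    show (volume : Measure (ℝ × ℝ)) = (volume : Measure ℝ).prod volume from rfl,
    Measure.prod_prod, hz, zero_mul]

lemma null_eq_fst : volume {v : ℝ × ℝ × ℝ | v.2.2 = v.1} = 0 := by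
  have hmeas : MeasurableSet {v : ℝ × ℝ × ℝ | v.2.2 = v.1} :=
    measurableSet_eq_fun (measurable_snd.snd) measurable_fst
  rw [show (volume : Measure (ℝ × ℝ × ℝ)) = (volume : Measure ℝ).prod volume from rfl,
    Measure.measure_prod_null hmeas]
  refine Filter.Eventually.of_forall fun L => ?_
  have : (Prod.mk L ⁻¹' {v : ℝ × ℝ × ℝ | v.2.2 = v.1}) = (Set.univ : Set ℝ) ×ˢ {L} := by
    ext ⟨u, a⟩
    simp [eq_comm]
  show volume (Prod.mk L ⁻¹' {v : ℝ × ℝ × ℝ | v.2.2 = v.1}) = 0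
  rw [this,
    show (volume : Measure (ℝ × ℝ)) = (volume : Measure ℝ).prod volume from rfl,
    Measure.prod_prod, Real.volume_singleton, mul_zero]

lemma null_diag : volume {v : ℝ × ℝ × ℝ | v.2.2 = v.2.1} = 0 := by
  have hmeas : MeasurableSet {v : ℝ × ℝ × ℝ | v.2.2 = v.2.1} :=
    measurableSet_eq_fun (measurable_snd.snd) (measurable_snd.fst)
  rw [show (volume : Measure (ℝ × ℝ × ℝ)) = (volume : Measure ℝ).prod volume from rfl,
    Measure.measure_prod_null hmeas]
  refine Filter.Eventually.of_forall fun L => ?_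
  have hmeas2 : MeasurableSet {w : ℝ × ℝ | w.2 = w.1} :=
    measurableSet_eq_fun measurable_snd measurable_fst
  have : (Prod.mk L ⁻¹' {v : ℝ × ℝ × ℝ | v.2.2 = v.2.1}) = {w : ℝ × ℝ | w.2 = w.1} := rfl
  show volume (Prod.mk L ⁻¹' {v : ℝ × ℝ × ℝ | v.2.2 = v.2.1}) = 0
  rw [this,
    show (volume : Measure (ℝ × ℝ)) = (volume : Measure ℝ).prod volume from rfl,
    Measure.measure_prod_null hmeas2]
  refine Filter.Eventually.of_forall fun u => ?_
  have : (Prod.mk u ⁻¹' {w : ℝ × ℝ | w.2 = w.1}) = {u} := by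
    ext a
    simp [eq_comm]
  show volume (Prod.mk u ⁻¹' {w : ℝ × ℝ | w.2 = w.1}) = 0
  rw [this, Real.volume_singleton]

end Null

theorem secant_newton_almost_always_better (n : ℕ) (hn : 2 ≤ n) (p q : ℕ → ℝ)
    (hc : Contracting n p q)
    (hne : ∃ i ≤ 2 * n, p i ≠ pstar n i ∨ q i ≠ qstar n i) :
    MeasureTheory.volume {v : ℝ × ℝ × ℝ |
      0 < v.1 ∧ v.1 ≤ v.2.2 ∧ v.2.2 ≤ v.2.1 ∧
      lowerOut n p v.1 v.2.1 (v.2.2 ^ n) = lowerOut n (pstar n) v.1 v.2.1 (v.2.2 ^ n) ∧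
      upperOut n q v.1 v.2.1 (v.2.2 ^ n) = upperOut n (qstar n) v.1 v.2.1 (v.2.2 ^ n)} = 0 ∧
    ∀ᵐ v : ℝ × ℝ × ℝ ∂MeasureTheory.volume,
      (0 < v.1 ∧ v.1 ≤ v.2.2 ∧ v.2.2 ≤ v.2.1) →
      Set.Icc (lowerOut n (pstar n) v.1 v.2.1 (v.2.2 ^ n))
              (upperOut n (qstar n) v.1 v.2.1 (v.2.2 ^ n)) ⊂
        Set.Icc (lowerOut n p v.1 v.2.1 (v.2.2 ^ n))
                (upperOut n q v.1 v.2.1 (v.2.2 ^ n)) := by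
  have hZ : ∃ S : Set (ℝ × ℝ × ℝ), volume S = 0 ∧
      ∀ v : ℝ × ℝ × ℝ, 0 < v.1 → v.1 < v.2.2 → v.2.2 < v.2.1 →
        lowerOut n p v.1 v.2.1 (v.2.2 ^ n) = lowerOut n (pstar n) v.1 v.2.1 (v.2.2 ^ n) →
        upperOut n q v.1 v.2.1 (v.2.2 ^ n) = upperOut n (qstar n) v.1 v.2.1 (v.2.2 ^ n) →
        v ∈ S := by
    obtain ⟨i, hi2n, hpq⟩ := hne
    rcases hpq with hp | hq
    · by_cases hin : i ≤ n
      · -- numerator of lower map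
        refine ⟨{v : ℝ × ℝ × ℝ |
            ∑ j ∈ Finset.range (n+1), (p j - pstar n j) * v.1 ^ (n-j) * v.2.1 ^ j = 0},
          null_poly (n+1) _ (fun j => n - j) ⟨i, by omega, sub_ne_zero.mpr hp⟩, ?_⟩
        intro v h0 h1 h2 hLeq _
        obtain ⟨hN, _⟩ := lower_eq hn hc h0 h1 h2.le hLeq
        show ∑ j ∈ Finset.range (n+1), (p j - pstar n j) * v.1 ^ (n-j) * v.2.1 ^ j = 0
        simp only [sub_mul]
        rw [Finset.sum_sub_distrib, hN, Np_star, sub_self]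
      · -- denominator of lower map
        refine ⟨{v : ℝ × ℝ × ℝ |
            ∑ j ∈ Finset.range n, (p (n+1+j) - 1) * v.1 ^ (n-1-j) * v.2.1 ^ j = 0},
          null_poly n _ (fun j => n-1-j) ⟨i - (n+1), by omega, ?_⟩, ?_⟩
        · rw [show n+1+(i-(n+1)) = i from by omega]
          have hps : pstar n i = 1 := by
            have h1 : ¬ (i = 0) := by omega
            have h2 : ¬ (i ≤ n) := hin
            simp [pstar, h1, h2]
          rw [← hps]
          exact sub_ne_zero.mpr hp
        · intro v h0 h1 h2 hLeq _
          obtain ⟨_, hD⟩ := lower_eq hn hc h0 h1 h2.le hLeq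
          show ∑ j ∈ Finset.range n, (p (n+1+j) - 1) * v.1 ^ (n-1-j) * v.2.1 ^ j = 0
          simp only [sub_mul, one_mul]
          rw [Finset.sum_sub_distrib, hD, DS, sub_self]
    · by_cases hin : i ≤ n
      · -- numerator of upper map
        refine ⟨{v : ℝ × ℝ × ℝ |
            ∑ j ∈ Finset.range (n+1), (q (n-j) - qstar n (n-j)) * v.1 ^ (n-j) * v.2.1 ^ j = 0},
          null_poly (n+1) _ (fun j => n - j)
            ⟨n - i, by omega, by
              rw [show n - (n - i) = i from by omega]; exact sub_ne_zero.mpr hq⟩, ?_⟩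
        intro v h0 h1 h2 _ hUeq
        obtain ⟨hN, _⟩ := upper_eq hn hc h0 h1.le h2 hUeq
        show ∑ j ∈ Finset.range (n+1), (q (n-j) - qstar n (n-j)) * v.1 ^ (n-j) * v.2.1 ^ j = 0
        have hrefl : ∑ j ∈ Finset.range (n+1),
              (q (n-j) - qstar n (n-j)) * v.1 ^ (n-j) * v.2.1 ^ j
            = ∑ i ∈ Finset.range (n+1), (q i - qstar n i) * v.2.1 ^ (n-i) * v.1 ^ i := by
          rw [← Finset.sum_range_reflect
            (fun i => (q i - qstar n i) * v.2.1 ^ (n-i) * v.1 ^ i) (n+1)]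
          refine Finset.sum_congr rfl fun j hj => ?_
          have hj' : j < n + 1 := Finset.mem_range.mp hj
          rw [show n + 1 - 1 - j = n - j from by omega, show n - (n - j) = j from by omega]
          ring
        rw [hrefl]
        simp only [sub_mul]
        rw [Finset.sum_sub_distrib, hN, Nq_star, sub_self]
      · -- denominator of upper map
        refine ⟨{v : ℝ × ℝ × ℝ |
            ∑ j ∈ Finset.range n, (q (2*n-j) - qstar n (2*n-j)) * v.1 ^ (n-1-j) * v.2.1 ^ j = 0},
          null_poly n _ (fun j => n-1-j)
            ⟨2*n - i, by omega, by
              rw [show 2*n - (2*n - i) = i from by omega]; exact sub_ne_zero.mpr hq⟩, ?_⟩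
        intro v h0 h1 h2 _ hUeq
        obtain ⟨_, hD⟩ := upper_eq hn hc h0 h1.le h2 hUeq
        show ∑ j ∈ Finset.range n, (q (2*n-j) - qstar n (2*n-j)) * v.1 ^ (n-1-j) * v.2.1 ^ j = 0
        have hrefl : ∑ j ∈ Finset.range n,
              (q (2*n-j) - qstar n (2*n-j)) * v.1 ^ (n-1-j) * v.2.1 ^ j
            = ∑ i ∈ Finset.range n,
              (q (n+1+i) - qstar n (n+1+i)) * v.2.1 ^ (n-1-i) * v.1 ^ i := by
          rw [← Finset.sum_range_reflect
            (fun i => (q (n+1+i) - qstar n (n+1+i)) * v.2.1 ^ (n-1-i) * v.1 ^ i) n]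
          refine Finset.sum_congr rfl fun j hj => ?_
          have hj' : j < n := Finset.mem_range.mp hj
          rw [show n+1+(n-1-j) = 2*n-j from by omega,
            show n-1-(n-1-j) = j from by omega]
          ring
        rw [hrefl]
        simp only [sub_mul]
        rw [Finset.sum_sub_distrib, hD, Dq_star, sub_self]
  obtain ⟨S, hS0, hSmem⟩ := hZ
  have hsub : {v : ℝ × ℝ × ℝ |
      0 < v.1 ∧ v.1 ≤ v.2.2 ∧ v.2.2 ≤ v.2.1 ∧
      lowerOut n p v.1 v.2.1 (v.2.2 ^ n) = lowerOut n (pstar n) v.1 v.2.1 (v.2.2 ^ n) ∧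
      upperOut n q v.1 v.2.1 (v.2.2 ^ n) = upperOut n (qstar n) v.1 v.2.1 (v.2.2 ^ n)}
      ⊆ S ∪ ({v : ℝ × ℝ × ℝ | v.2.2 = v.1} ∪ {v : ℝ × ℝ × ℝ | v.2.2 = v.2.1}) := by
    rintro v ⟨h0, hLa, haU, hLeq, hUeq⟩
    by_cases e1 : v.2.2 = v.1
    · exact Or.inr (Or.inl e1)
    by_cases e2 : v.2.2 = v.2.1
    · exact Or.inr (Or.inr e2)
    exact Or.inl (hSmem v h0 (lt_of_le_of_ne hLa (Ne.symm e1)) (lt_of_le_of_ne haU e2) hLeq hUeq)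
  have hT : MeasureTheory.volume {v : ℝ × ℝ × ℝ |
      0 < v.1 ∧ v.1 ≤ v.2.2 ∧ v.2.2 ≤ v.2.1 ∧
      lowerOut n p v.1 v.2.1 (v.2.2 ^ n) = lowerOut n (pstar n) v.1 v.2.1 (v.2.2 ^ n) ∧
      upperOut n q v.1 v.2.1 (v.2.2 ^ n) = upperOut n (qstar n) v.1 v.2.1 (v.2.2 ^ n)} = 0 :=
    measure_mono_null hsub
      (measure_union_null hS0 (measure_union_null null_eq_fst null_diag))
  refine ⟨hT, ?_⟩
  have a1 := measure_eq_zero_iff_ae_notMem.mp hT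
  have a2 := measure_eq_zero_iff_ae_notMem.mp null_eq_fst
  have a3 := measure_eq_zero_iff_ae_notMem.mp null_diag
  filter_upwards [a1, a2, a3] with v hvT hv1 hv2
  rintro ⟨h0, hLa, haU⟩
  have h1 : v.1 < v.2.2 := lt_of_le_of_ne hLa (fun h => hv1 h.symm)
  have h2 : v.2.2 < v.2.1 := lt_of_le_of_ne haU hv2
  have hLU : v.1 < v.2.1 := h1.trans h2
  have hll := lower_le hn hc h0 hLa haU hLU
  have huu := upper_le hn hc h0 hLa haU hLU
  have hsl := star_lower_bounds hn h0 hLa haU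
  have hsu := star_upper_bounds hn h0 hLa haU
  have hLsUs : lowerOut n (pstar n) v.1 v.2.1 (v.2.2 ^ n)
      ≤ upperOut n (qstar n) v.1 v.2.1 (v.2.2 ^ n) := hsl.2.trans hsu.1
  rw [Set.ssubset_iff_subset_ne]
  refine ⟨Set.Icc_subset_Icc hll huu, fun heq => ?_⟩
  have hmem : lowerOut n p v.1 v.2.1 (v.2.2 ^ n) ∈
      Set.Icc (lowerOut n (pstar n) v.1 v.2.1 (v.2.2 ^ n))
        (upperOut n (qstar n) v.1 v.2.1 (v.2.2 ^ n)) := by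
    rw [heq]
    exact Set.left_mem_Icc.mpr (hll.trans (hLsUs.trans huu))
  have hmem2 : upperOut n q v.1 v.2.1 (v.2.2 ^ n) ∈
      Set.Icc (lowerOut n (pstar n) v.1 v.2.1 (v.2.2 ^ n))
        (upperOut n (qstar n) v.1 v.2.1 (v.2.2 ^ n)) := by
    rw [heq]
    exact Set.right_mem_Icc.mpr (hll.trans (hLsUs.trans huu))
  exact hvT ⟨h0, hLa, haU, le_antisymm hll hmem.1, le_antisymm hmem2.2 huu⟩
end
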